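/- Let 0 < p < 1/2 and define h(x) = −x log₂ x − (1−x) log₂(1−x), D(x‖y) = x log₂(x/y) + (1−x) log₂((1−x)/(1−y)), A(ω) = ω log₂(2√(p(1−p))), ρ₀ = √p/(√p + √(1−p)), ω₀ = 2ρ₀(1−ρ₀), and R_crit = 1 − h(ρ₀). Let R₁ ∈ ℝ, let g : ℝ → ℝ be differentiable at R₁ with g(R₁) = ω₀ and 0 < g(R) < 1 in a neighborhood of R₁, and define f(R) = 1 − R − h(g(R)) − A(g(R)). Then f(R₁) = D(ρ₀‖p) + R_crit − R₁ and f′(R₁) = −1; that is, the graph of f is tangent at R = R₁ to the straight line R ↦ D(ρ₀‖p) + R_crit − R. -/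

import Mathlib

/-- The binary entropy function `h(x) = −x log₂ x − (1−x) log₂(1−x)`. -/
noncomputable def binEnt (x : ℝ) : ℝ :=
  -x * Real.logb 2 x - (1 - x) * Real.logb 2 (1 - x)

/-- The binary Kullback–Leibler divergence
`D(x‖y) = x log₂(x/y) + (1−x) log₂((1−x)/(1−y))`. -/
noncomputable def binKL (x y : ℝ) : ℝ :=
  x * Real.logb 2 (x / y) + (1 - x) * Real.logb 2 ((1 - x) / (1 - y))

/-- The pairwise error exponent `A(ω) = ω log₂(2√(p(1−p)))`. -/
noncomputable def Aexp (p ω : ℝ) : ℝ := ω * Real.logb 2 (2 * Real.sqrt (p * (1 - p)))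

/-- `ρ₀ = √p / (√p + √(1−p))`. -/
noncomputable def rho0 (p : ℝ) : ℝ := Real.sqrt p / (Real.sqrt p + Real.sqrt (1 - p))

lemma hasDerivAt_binEnt {x : ℝ} (hx0 : x ≠ 0) (hx1 : x ≠ 1) :
    HasDerivAt binEnt ((Real.log (1 - x) - Real.log x) / Real.log 2) x := by
  have h1 := Real.hasDerivAt_mul_log hx0
  have hu : HasDerivAt (fun y : ℝ => 1 - y) (-1) x := by
    exact (hasDerivAt_id x).const_sub 1
  have h2 : HasDerivAt (fun y : ℝ => (1 - y) * Real.log (1 - y))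
      ((Real.log (1 - x) + 1) * (-1)) x :=
    (Real.hasDerivAt_mul_log (sub_ne_zero.mpr (Ne.symm hx1))).comp x hu
  have h3 : HasDerivAt
      (fun y : ℝ => (-(y * Real.log y) - (1 - y) * Real.log (1 - y)) / Real.log 2)
      ((-(Real.log x + 1) - (Real.log (1 - x) + 1) * (-1)) / Real.log 2) x :=
    (h1.neg.sub h2).div_const _
  have heq : binEnt =
      fun y : ℝ => (-(y * Real.log y) - (1 - y) * Real.log (1 - y)) / Real.log 2 := by
    funext y; simp [binEnt, Real.logb]; ring
  rw [heq]
  convert h3 using 1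
  ring

/-- **Tangency of the union-bound exponent to the straight line** (Lemma 1):
let `g` be differentiable at `R₁` with `g R₁ = ω₀ = 2ρ₀(1−ρ₀)` and `0 < g < 1` near
`R₁`, and let `f(R) = 1 − R − h(g R) − A(g R)`.  Then
`f(R₁) = D(ρ₀‖p) + R_crit − R₁` and `f'(R₁) = −1`, i.e. the graph of `f` is tangent
at `R₁` to the line `R ↦ D(ρ₀‖p) + R_crit − R`. -/
theorem unionBoundExponent_tangent_to_line
    (p : ℝ) (hp0 : 0 < p) (hp : p < 1 / 2)
    (R₁ : ℝ) (g : ℝ → ℝ) (hg : DifferentiableAt ℝ g R₁)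
    (hgval : g R₁ = 2 * rho0 p * (1 - rho0 p))
    (hgrange : ∀ᶠ R in nhds R₁, 0 < g R ∧ g R < 1) :
    (1 - R₁ - binEnt (g R₁) - Aexp p (g R₁)
        = binKL (rho0 p) p + (1 - binEnt (rho0 p)) - R₁)
      ∧ HasDerivAt (fun R => 1 - R - binEnt (g R) - Aexp p (g R)) (-1) R₁ := by
  have hpq : (0 : ℝ) < 1 - p := by linarith
  have ha : 0 < Real.sqrt p := Real.sqrt_pos.mpr hp0
  have hb : 0 < Real.sqrt (1 - p) := Real.sqrt_pos.mpr hpq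
  set a := Real.sqrt p with ha_def
  set b := Real.sqrt (1 - p) with hb_def
  have ha2 : a * a = p := Real.mul_self_sqrt hp0.le
  have hb2 : b * b = 1 - p := Real.mul_self_sqrt hpq.le
  have hs : 0 < a + b := by linarith
  have hsne : a + b ≠ 0 := hs.ne'
  have hρ : rho0 p = a / (a + b) := rfl
  have hss : (a + b) * (a + b) = 1 + 2 * (a * b) := by linear_combination ha2 + hb2
  have h1ρ : 1 - rho0 p = b / (a + b) := by rw [hρ]; field_simp; ring
  have hω : g R₁ = 2 * (a * b) / ((a + b) * (a + b)) := by
    rw [hgval, hρ]; field_simp; ring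
  have h1ω : 1 - g R₁ = 1 / ((a + b) * (a + b)) := by
    rw [hω]; field_simp; linear_combination hss
  have hω0 : 0 < g R₁ := by rw [hω]; positivity
  have hω1 : g R₁ < 1 := by
    have h : (0 : ℝ) < 1 / ((a + b) * (a + b)) := by positivity
    linarith [h1ω ▸ h]
  have hL : Real.log 2 ≠ 0 := (Real.log_pos one_lt_two).ne'
  -- log facts
  have hlρ : Real.log (rho0 p) = Real.log a - Real.log (a + b) := by
    rw [hρ, Real.log_div ha.ne' hsne]
  have hl1ρ : Real.log (1 - rho0 p) = Real.log b - Real.log (a + b) := by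
    rw [h1ρ, Real.log_div hb.ne' hsne]
  have hlρp : Real.log (rho0 p / p) = -Real.log a - Real.log (a + b) := by
    have h : rho0 p / p = 1 / (a * (a + b)) := by
      rw [hρ, ← ha2]; field_simp
    rw [h, Real.log_div one_ne_zero (by positivity), Real.log_mul ha.ne' hsne, Real.log_one]
    ring
  have hl1ρp : Real.log ((1 - rho0 p) / (1 - p)) = -Real.log b - Real.log (a + b) := by
    have h : (1 - rho0 p) / (1 - p) = 1 / (b * (a + b)) := by
      rw [h1ρ, ← hb2]; field_simp
    rw [h, Real.log_div one_ne_zero (by positivity), Real.log_mul hb.ne' hsne, Real.log_one]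
    ring
  have hlω : Real.log (g R₁)
      = Real.log 2 + Real.log a + Real.log b - 2 * Real.log (a + b) := by
    rw [hω, Real.log_div (by positivity) (by positivity),
      Real.log_mul two_ne_zero (by positivity), Real.log_mul ha.ne' hb.ne',
      Real.log_mul hsne hsne]
    ring
  have hl1ω : Real.log (1 - g R₁) = -(2 * Real.log (a + b)) := by
    rw [h1ω, Real.log_div one_ne_zero (by positivity), Real.log_mul hsne hsne, Real.log_one]
    ring
  have hl2ab : Real.log (2 * Real.sqrt (p * (1 - p)))
      = Real.log 2 + Real.log a + Real.log b := by
    rw [Real.sqrt_mul hp0.le, ← ha_def, ← hb_def, Real.log_mul two_ne_zero (by positivity),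
      Real.log_mul ha.ne' hb.ne']
    ring
  constructor
  · simp only [binEnt, binKL, Aexp, Real.logb]
    rw [hlρ, hl1ρ, hlρp, hl1ρp, hlω, hl1ω, hl2ab]
    field_simp
    ring
  · have hd1 : HasDerivAt binEnt
        ((Real.log (1 - g R₁) - Real.log (g R₁)) / Real.log 2) (g R₁) :=
      hasDerivAt_binEnt hω0.ne' hω1.ne
    have hd2 : HasDerivAt (Aexp p)
        (Real.log (2 * Real.sqrt (p * (1 - p))) / Real.log 2) (g R₁) := by
      have : HasDerivAt (fun ω : ℝ => ω * Real.logb 2 (2 * Real.sqrt (p * (1 - p))))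
          (Real.logb 2 (2 * Real.sqrt (p * (1 - p)))) (g R₁) := hasDerivAt_mul_const _
      exact this
    have hkey : (Real.log (1 - g R₁) - Real.log (g R₁)) / Real.log 2
        + Real.log (2 * Real.sqrt (p * (1 - p))) / Real.log 2 = 0 := by
      rw [hl1ω, hlω, hl2ab, ← add_div, div_eq_zero_iff]
      left; ring
    have hsum : HasDerivAt (fun ω : ℝ => binEnt ω + Aexp p ω) 0 (g R₁) := by
      have h := hd1.add hd2
      rwa [hkey] at h
    have hcomp : HasDerivAt (fun R => binEnt (g R) + Aexp p (g R)) (0 * deriv g R₁) R₁ :=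
      hsum.comp R₁ hg.hasDerivAt
    have hbase : HasDerivAt (fun R : ℝ => 1 - R) (-1) R₁ := by
      exact (hasDerivAt_id R₁).const_sub 1
    have hfinal := hbase.sub hcomp
    have heq : (fun R => 1 - R - binEnt (g R) - Aexp p (g R))
        = fun R => (1 - R) - (binEnt (g R) + Aexp p (g R)) := by
      funext R; ring
    rw [heq]
    refine hfinal.congr_deriv ?_
    ring
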